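/- Let T : ℝ → ℝ² be continuous on [a,b] with a ≤ b and let s > 0. Then the hotspot weight is attained: there exist an axis-parallel square r of side s and times u, v with a ≤ u ≤ v ≤ b such that T_{uv} is contained in r and v − u = H_s(T,[a,b]). -/

import Mathlib

open Set

/-- `r` is an axis-parallel square of side `s`, i.e. `[p, p+s] × [q, q+s]`. -/
def IsAPSquare (s : ℝ) (r : Set (ℝ × ℝ)) : Prop :=
  ∃ p q : ℝ, r = Icc p (p + s) ×ˢ Icc q (q + s)

/-- The weight of a region `r` with respect to the trajectory `T` and the
time window `[u, v]`: the supremum of durations `d - c` of subtrajectories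
`T_{cd}` (with `u ≤ c ≤ d ≤ v`) contained in `r`. -/
noncomputable def weight (T : ℝ → ℝ × ℝ) (u v : ℝ) (r : Set (ℝ × ℝ)) : ℝ :=
  sSup { w : ℝ | ∃ c d : ℝ, u ≤ c ∧ c ≤ d ∧ d ≤ v ∧
    (∀ τ ∈ Icc c d, T τ ∈ r) ∧ w = d - c }

/-- The hotspot weight `H_s(T, [u, v])`: the supremum of the weights of all
axis-parallel squares of side `s` with respect to `T` and `[u, v]`. -/
noncomputable def hotspotWeight (s : ℝ) (T : ℝ → ℝ × ℝ) (u v : ℝ) : ℝ :=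
  sSup { w : ℝ | ∃ r : Set (ℝ × ℝ), IsAPSquare s r ∧ w = weight T u v r }

/-- `D₋(t)` with respect to the window starting at `u`: the supremum of
durations `t - c` with `u ≤ c ≤ t` such that `T_{ct}` is contained in some
axis-parallel square of side `s`. -/
noncomputable def Dminus (s : ℝ) (T : ℝ → ℝ × ℝ) (u t : ℝ) : ℝ :=
  sSup { w : ℝ | ∃ c : ℝ, u ≤ c ∧ c ≤ t ∧
    (∃ r : Set (ℝ × ℝ), IsAPSquare s r ∧ ∀ τ ∈ Icc c t, T τ ∈ r) ∧ w = t - c }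

/-- `D₊(t)` with respect to the window ending at `v`: the supremum of
durations `d - t` with `t ≤ d ≤ v` such that `T_{td}` is contained in some
axis-parallel square of side `s`. -/
noncomputable def Dplus (s : ℝ) (T : ℝ → ℝ × ℝ) (v t : ℝ) : ℝ :=
  sSup { w : ℝ | ∃ d : ℝ, t ≤ d ∧ d ≤ v ∧
    (∃ r : Set (ℝ × ℝ), IsAPSquare s r ∧ ∀ τ ∈ Icc t d, T τ ∈ r) ∧ w = d - t }

open Filter Topology

lemma duration_le_hotspot (T : ℝ → ℝ × ℝ) (a b s : ℝ) (hab : a ≤ b)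
    {c d : ℝ} {r : Set (ℝ × ℝ)} (hr : IsAPSquare s r)
    (hac : a ≤ c) (hcd : c ≤ d) (hdb : d ≤ b)
    (hmem : ∀ τ ∈ Icc c d, T τ ∈ r) :
    d - c ≤ hotspotWeight s T a b := by
  have hw : d - c ≤ weight T a b r := by
    apply le_csSup
    · exact ⟨b - a, by rintro w ⟨c', d', h1, h2, h3, _, rfl⟩; linarith⟩
    · exact ⟨c, d, hac, hcd, hdb, hmem, rfl⟩
  refine hw.trans (le_csSup ⟨b - a, ?_⟩ ⟨r, hr, rfl⟩)
  rintro w ⟨r', hr', rfl⟩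
  exact Real.sSup_le (by rintro w ⟨c', d', h1, h2, h3, _, rfl⟩; linarith) (by linarith)

lemma hotspot_approx (T : ℝ → ℝ × ℝ) (a b s : ℝ) (hab : a ≤ b) (hs : 0 < s)
    {ε : ℝ} (hε : 0 < ε) :
    ∃ c d : ℝ, a ≤ c ∧ c ≤ d ∧ d ≤ b ∧
      (∃ r : Set (ℝ × ℝ), IsAPSquare s r ∧ ∀ τ ∈ Icc c d, T τ ∈ r) ∧
      hotspotWeight s T a b - ε ≤ d - c := by
  set L := hotspotWeight s T a b with hLdef
  set r₀ : Set (ℝ × ℝ) := Icc (T a).1 ((T a).1 + s) ×ˢ Icc (T a).2 ((T a).2 + s) with hr₀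
  have hr₀sq : IsAPSquare s r₀ := ⟨(T a).1, (T a).2, rfl⟩
  have hTa : ∀ τ ∈ Icc a a, T τ ∈ r₀ := by
    intro τ hτ
    rw [Icc_self, mem_singleton_iff] at hτ
    subst hτ
    exact ⟨⟨le_refl _, by linarith⟩, ⟨le_refl _, by linarith⟩⟩
  rcases le_or_gt (L - ε) 0 with h | h
  · exact ⟨a, a, le_refl a, le_refl a, hab, ⟨r₀, hr₀sq, hTa⟩, by linarith⟩
  · have hne : {w : ℝ | ∃ r : Set (ℝ × ℝ), IsAPSquare s r ∧ w = weight T a b r}.Nonempty :=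
      ⟨weight T a b r₀, r₀, hr₀sq, rfl⟩
    obtain ⟨w, ⟨r, hrsq, rfl⟩, hw⟩ := exists_lt_of_lt_csSup hne (show L - ε/2 < L by linarith)
    have hwpos : 0 < weight T a b r := by linarith
    have hsetne : {w : ℝ | ∃ c d : ℝ, a ≤ c ∧ c ≤ d ∧ d ≤ b ∧
        (∀ τ ∈ Icc c d, T τ ∈ r) ∧ w = d - c}.Nonempty := by
      by_contra hcon
      rw [Set.not_nonempty_iff_eq_empty] at hcon
      rw [weight, hcon, Real.sSup_empty] at hwpos
      exact lt_irrefl 0 hwpos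
    obtain ⟨x, ⟨c, d, h1, h2, h3, h4, rfl⟩, hx⟩ :=
      exists_lt_of_lt_csSup hsetne (show weight T a b r - ε/2 < weight T a b r by linarith)
    exact ⟨c, d, h1, h2, h3, ⟨r, hrsq, h4⟩, by linarith⟩

theorem hotspotWeight_attained (T : ℝ → ℝ × ℝ) (a b s : ℝ) (hab : a ≤ b)
    (hs : 0 < s) (hT : ContinuousOn T (Icc a b)) :
    ∃ (r : Set (ℝ × ℝ)) (u v : ℝ), IsAPSquare s r ∧
      a ≤ u ∧ u ≤ v ∧ v ≤ b ∧ (∀ τ ∈ Icc u v, T τ ∈ r) ∧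
      v - u = hotspotWeight s T a b := by
  set L := hotspotWeight s T a b with hLdef
  have happrox : ∀ n : ℕ, ∃ c d : ℝ, a ≤ c ∧ c ≤ d ∧ d ≤ b ∧
      (∃ r : Set (ℝ × ℝ), IsAPSquare s r ∧ ∀ τ ∈ Icc c d, T τ ∈ r) ∧
      L - 1 / (n + 1) ≤ d - c := fun n =>
    hotspot_approx T a b s hab hs (by positivity)
  choose c d hac hcd hdb hsq hclose using happrox
  obtain ⟨⟨u, v⟩, huv_mem, φ, hφ, hlim⟩ :=
    (isCompact_Icc.prod isCompact_Icc).tendsto_subseq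
      (x := fun n => (c n, d n))
      (fun n => ⟨⟨hac n, (hcd n).trans (hdb n)⟩, ⟨(hac n).trans (hcd n), hdb n⟩⟩)
  obtain ⟨⟨hau, hub⟩, hav, hvb⟩ := huv_mem
  have hlimc : Tendsto (fun n => c (φ n)) atTop (𝓝 u) :=
    (continuous_fst.tendsto _).comp hlim
  have hlimd : Tendsto (fun n => d (φ n)) atTop (𝓝 v) :=
    (continuous_snd.tendsto _).comp hlim
  have huv : u ≤ v := le_of_tendsto_of_tendsto' hlimc hlimd (fun n => hcd (φ n))
  have hlimsub : Tendsto (fun n => d (φ n) - c (φ n)) atTop (𝓝 (v - u)) :=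
    hlimd.sub hlimc
  -- v - u = L
  have hupper : v - u ≤ L :=
    le_of_tendsto' hlimsub fun n =>
      (hsq (φ n)).elim fun r ⟨hrsq, hmem⟩ =>
        duration_le_hotspot T a b s hab hrsq (hac _) (hcd _) (hdb _) hmem
  have h0 : Tendsto (fun n : ℕ => (1 : ℝ) / (φ n + 1)) atTop (𝓝 0) := by
    have := tendsto_one_div_add_atTop_nhds_zero_nat (𝕜 := ℝ)
    refine squeeze_zero (fun n => by positivity) (fun n => ?_) this
    apply div_le_div_of_nonneg_left (by norm_num) (by positivity)
    have h := hφ.le_apply (x := n)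
    have : (n : ℝ) ≤ (φ n : ℝ) := Nat.cast_le.mpr h
    linarith
  have hlower : L ≤ v - u := by
    have hlimL : Tendsto (fun n : ℕ => L - 1 / (φ n + 1)) atTop (𝓝 L) := by
      simpa using tendsto_const_nhds.sub h0
    exact le_of_tendsto_of_tendsto' hlimL hlimsub fun n => hclose (φ n)
  have hvuL : v - u = L := le_antisymm hupper hlower
  -- the pairwise oscillation bound on [u,v]
  have hsubab : Icc u v ⊆ Icc a b := Icc_subset_Icc hau hvb
  have key : ∀ τ ∈ Icc u v, ∀ σ ∈ Icc u v,
      (T τ).1 - (T σ).1 ≤ s ∧ (T τ).2 - (T σ).2 ≤ s := by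
    have hclamp : ∀ t ∈ Icc u v, ∀ n, max (c (φ n)) (min t (d (φ n))) ∈ Icc (c (φ n)) (d (φ n)) := by
      intro t ht n
      exact ⟨le_max_left _ _, max_le (hcd _) (min_le_right _ _)⟩
    have htend : ∀ t ∈ Icc u v,
        Tendsto (fun n => T (max (c (φ n)) (min t (d (φ n))))) atTop (𝓝 (T t)) := by
      intro t ht
      have h1 : Tendsto (fun n => max (c (φ n)) (min t (d (φ n)))) atTop
          (𝓝 (max u (min t v))) := hlimc.max (tendsto_const_nhds.min hlimd)
      rw [min_eq_left ht.2, max_eq_right ht.1] at h1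
      have h2 : Tendsto (fun n => max (c (φ n)) (min t (d (φ n)))) atTop (𝓝[Icc a b] t) := by
        refine tendsto_nhdsWithin_of_tendsto_nhds_of_eventually_within _ h1 ?_
        exact Eventually.of_forall fun n =>
          (Icc_subset_Icc (hac _) (hdb _)) (hclamp t ht n)
      exact (hT t (hsubab ht)).tendsto.comp h2
    intro τ hτ σ hσ
    have hb : ∀ n, (T (max (c (φ n)) (min τ (d (φ n))))).1 -
          (T (max (c (φ n)) (min σ (d (φ n))))).1 ≤ s ∧
        (T (max (c (φ n)) (min τ (d (φ n))))).2 -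
          (T (max (c (φ n)) (min σ (d (φ n))))).2 ≤ s := by
      intro n
      obtain ⟨r, ⟨p, q, rfl⟩, hmem⟩ := hsq (φ n)
      have h1 := hmem _ (hclamp τ hτ n)
      have h2 := hmem _ (hclamp σ hσ n)
      obtain ⟨⟨h1a, h1b⟩, h1c, h1d⟩ := h1
      obtain ⟨⟨h2a, h2b⟩, h2c, h2d⟩ := h2
      constructor <;> linarith
    have htτ := htend τ hτ
    have htσ := htend σ hσ
    constructor
    · exact le_of_tendsto (((continuous_fst.tendsto _).comp htτ).sub
        ((continuous_fst.tendsto _).comp htσ)) (Eventually.of_forall fun n => (hb n).1)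
    · exact le_of_tendsto (((continuous_snd.tendsto _).comp htτ).sub
        ((continuous_snd.tendsto _).comp htσ)) (Eventually.of_forall fun n => (hb n).2)
  -- build the square from the attained minima of coordinates
  have hKne : (Icc u v).Nonempty := nonempty_Icc.mpr huv
  have hcont1 : ContinuousOn (fun t => (T t).1) (Icc u v) :=
    continuous_fst.comp_continuousOn (hT.mono hsubab)
  have hcont2 : ContinuousOn (fun t => (T t).2) (Icc u v) :=
    continuous_snd.comp_continuousOn (hT.mono hsubab)
  obtain ⟨τ₀, hτ₀, hmin1⟩ := isCompact_Icc.exists_isMinOn hKne hcont1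
  obtain ⟨σ₀, hσ₀, hmin2⟩ := isCompact_Icc.exists_isMinOn hKne hcont2
  refine ⟨Icc (T τ₀).1 ((T τ₀).1 + s) ×ˢ Icc (T σ₀).2 ((T σ₀).2 + s), u, v,
    ⟨(T τ₀).1, (T σ₀).2, rfl⟩, hau, huv, hvb, ?_, hvuL⟩
  intro τ hτ
  refine ⟨⟨hmin1 hτ, ?_⟩, hmin2 hτ, ?_⟩
  · have := (key τ hτ τ₀ hτ₀).1; linarith
  · have := (key τ hτ σ₀ hσ₀).2; linarith
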